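/- arXiv:0811.3390 — 2 statements merged into one kernel-verified Lean document; each statement's English description precedes it below -/
import Mathlib

section
/- Let a and b be coprime integers with 0 < a < b, β ∈ ℂ, and fix a real s ≥ 1. Let f, g ∈ ℂ[[x₁,x₂]] be Gevrey of order s and suppose that (E + ab) f − P g is convergent, where ((E + ab) f)_{(i,j)} = (a·i + b·j − β + ab)·f_{(i,j)}. Then there exists h ∈ ℂ[[x₁,x₂]], Gevrey of order s, such that P h − f and E h − g are both convergent. (This expresses the vanishing of the degree-one cohomology of the irregularity complex Irr_Y^{(s)}(M_A(β)) at the origin.) -/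
noncomputable section

open scoped Classical

abbrev M2 : Type := MvPowerSeries (Fin 2) ℂ

/-- Coefficient `f_{(i,j)}` of a formal power series `f ∈ ℂ[[x₁,x₂]]`. -/
def co (f : M2) (i j : ℕ) : ℂ :=
  MvPowerSeries.coeff (Finsupp.single (0 : Fin 2) i + Finsupp.single (1 : Fin 2) j) f

/-- A coefficient family `F` is Gevrey of order `s` along `x₂ = 0`:
`|F i j| ≤ C·R^(i+j)·(j!)^(s-1)` for some `C, R > 0`. -/
def GevreyFn (s : ℝ) (F : ℕ → ℕ → ℂ) : Prop :=
  ∃ C R : ℝ, 0 < C ∧ 0 < R ∧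
    ∀ i j : ℕ, ‖F i j‖ ≤ C * R ^ (i + j) * (j.factorial : ℝ) ^ (s - 1)

/-- A coefficient family is convergent iff it is Gevrey of order `1`, i.e.
`|F i j| ≤ C·R^(i+j)` for some `C, R > 0`. -/
def ConvFn (F : ℕ → ℕ → ℂ) : Prop := GevreyFn 1 F

/-- Coefficients of `P f` where `P = ∂₁^b - ∂₂^a`:
`(P f)_{(i,j)} = ((i+b)!/i!)·f_{(i+b,j)} - ((j+a)!/j!)·f_{(i,j+a)}`. -/
def Pco (a b : ℕ) (f : M2) (i j : ℕ) : ℂ :=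
  (((i + b).factorial / i.factorial : ℕ) : ℂ) * co f (i + b) j
    - (((j + a).factorial / j.factorial : ℕ) : ℂ) * co f i (j + a)

/-- Coefficients of `E f` where `E = a·x₁∂₁ + b·x₂∂₂ - β`:
`(E f)_{(i,j)} = (a·i + b·j - β)·f_{(i,j)}`. -/
def Eco (a b : ℕ) (β : ℂ) (f : M2) (i j : ℕ) : ℂ :=
  (((a * i + b * j : ℕ) : ℂ) - β) * co f i j

/-- Coefficients of `E_p f` where `E_p = a·(t₁+ε)∂₁ + b·x₂∂₂ - β`:
`(E_p f)_{(i,j)} = (a·i + b·j - β)·f_{(i,j)} + a·ε·(i+1)·f_{(i+1,j)}`. -/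
def Epco (a b : ℕ) (β ε : ℂ) (f : M2) (i j : ℕ) : ℂ :=
  (((a * i + b * j : ℕ) : ℂ) - β) * co f i j + (a : ℂ) * ε * ((i : ℂ) + 1) * co f (i + 1) j

theorem delta_bound (β : ℂ) : ∃ δ : ℝ, 0 < δ ∧ ∀ n : ℕ, (n:ℂ) ≠ β → δ ≤ ‖(n:ℂ) - β‖ := by
  by_cases hβ : ∃ n0 : ℕ, (n0:ℂ) = β
  · obtain ⟨n0, hn0⟩ := hβ
    refine ⟨1, one_pos, fun n hn => ?_⟩
    have hne : (n : ℤ) ≠ (n0 : ℤ) := by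
      intro h
      exact hn (by rw [← hn0]; exact_mod_cast congrArg (fun z : ℤ => (z : ℂ)) h)
    have heq : ((n:ℂ) - β) = (((n : ℤ) - n0 : ℤ) : ℂ) := by rw [← hn0]; push_cast; ring
    rw [heq, Complex.norm_intCast]
    have h1 : (1 : ℤ) ≤ |(n:ℤ) - n0| := Int.one_le_abs (by omega)
    exact_mod_cast h1
  · push_neg at hβ
    set N := ⌈‖β‖⌉₊ + 1 with hN
    have hne : (Finset.range N).Nonempty := ⟨0, by simp [hN]⟩
    set δ0 := (Finset.range N).inf' hne (fun n => ‖(n:ℂ) - β‖) with hδ0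
    refine ⟨min 1 δ0, lt_min one_pos ?_, fun n hn => ?_⟩
    · rw [hδ0, Finset.lt_inf'_iff]
      intro n _
      exact norm_pos_iff.mpr (sub_ne_zero.mpr (hβ n))
    · by_cases hcase : n < N
      · exact le_trans (min_le_right _ _) (Finset.inf'_le _ (Finset.mem_range.mpr hcase))
      · push_neg at hcase
        refine le_trans (min_le_left _ _) ?_
        have h1 : ‖β‖ ≤ ⌈‖β‖⌉₊ := Nat.le_ceil _
        have h2 : (N : ℝ) ≤ n := by exact_mod_cast hcase
        have h3 : ‖(n:ℂ)‖ - ‖β‖ ≤ ‖(n:ℂ) - β‖ := norm_sub_norm_le _ _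
        rw [Complex.norm_natCast] at h3
        have h4 : (N : ℝ) = (⌈‖β‖⌉₊ : ℝ) + 1 := by rw [hN]; push_cast; ring
        linarith

theorem co_mk (H : ℕ → ℕ → ℂ) (i j : ℕ) :
    co (fun m => H (m 0) (m 1) : M2) i j = H i j := by
  show (fun m : Fin 2 →₀ ℕ => H (m 0) (m 1)) _ = H i j
  congr 1 <;> simp [Finsupp.single_apply]

/-- Vanishing of the degree-one cohomology of `Irr_Y^{(s)}(M_A(β))` at the origin: if `f, g`
are Gevrey of order `s` and `(E + ab) f - P g` is convergent, then there is `h` Gevrey of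
order `s` such that `P h - f` and `E h - g` are both convergent. -/
theorem ext_one_irregularity_at_origin_vanishes
    (a b : ℕ) (hab : Nat.Coprime a b) (ha : 0 < a) (haltb : a < b) (β : ℂ)
    (s : ℝ) (hs : 1 ≤ s) (f g : M2)
    (hf : GevreyFn s (co f)) (hg : GevreyFn s (co g))
    (hfg : ConvFn fun i j =>
      ((((a * i + b * j : ℕ) : ℂ) - β + (a : ℂ) * (b : ℂ)) * co f i j) - Pco a b g i j) :
    ∃ h : M2, GevreyFn s (co h) ∧
      (ConvFn fun i j => Pco a b h i j - co f i j) ∧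
      (ConvFn fun i j => Eco a b β h i j - co g i j) := by
  obtain ⟨Cf, Rf, hCf, hRf, hbf⟩ := hf
  obtain ⟨Cg, Rg, hCg, hRg, hbg⟩ := hg
  obtain ⟨Cu, Ru, hCu, hRu, hbu⟩ := hfg
  obtain ⟨δ, hδ, hδle⟩ := delta_bound β
  set N : ℕ := ⌊‖β‖⌋₊ with hNdef
  -- exceptional-index bound: if a natural combination equals β then j is small
  have hsmall : ∀ n j : ℕ, ((n : ℕ) : ℂ) = β → j ≤ n → (j.factorial : ℝ) ^ (s-1) ≤ (N.factorial : ℝ) ^ (s-1) := by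
    intro n j hn hjn
    have h1 : ‖β‖ = (n : ℝ) := by rw [← hn, Complex.norm_natCast]
    have hjN : j ≤ N := Nat.le_floor (by rw [h1]; exact_mod_cast hjn)
    exact Real.rpow_le_rpow (by positivity) (by exact_mod_cast Nat.factorial_le hjN) (by linarith)
  set H : ℕ → ℕ → ℂ := fun i j =>
    if ((a * i + b * j : ℕ) : ℂ) = β then 0
    else co g i j / (((a * i + b * j : ℕ) : ℂ) - β) with hH
  have hco : ∀ i j, co (fun m => H (m 0) (m 1) : M2) i j = H i j := co_mk H
  have hrpow1 : ∀ j : ℕ, ((j.factorial : ℝ)) ^ ((1:ℝ) - 1) = 1 := by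
    intro j; rw [show (1:ℝ) - 1 = 0 by ring, Real.rpow_zero]
  refine ⟨(fun m => H (m 0) (m 1) : M2), ?_, ?_, ?_⟩
  · -- Gevrey of order s
    refine ⟨Cg / δ, Rg, div_pos hCg hδ, hRg, fun i j => ?_⟩
    rw [hco]
    by_cases hc : ((a * i + b * j : ℕ) : ℂ) = β
    · rw [hH]; simp only [if_pos hc, norm_zero]
      positivity
    · rw [hH]; simp only [if_neg hc]
      rw [norm_div]
      have h1 : δ ≤ ‖((a*i+b*j:ℕ):ℂ) - β‖ := hδle _ hc
      have h2 := hbg i j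
      calc ‖co g i j‖ / ‖((a*i+b*j:ℕ):ℂ) - β‖
          ≤ (Cg * Rg ^ (i+j) * (j.factorial : ℝ) ^ (s-1)) / δ := by
            gcongr
        _ = Cg / δ * Rg ^ (i+j) * (j.factorial : ℝ) ^ (s-1) := by ring
  · -- P h - f convergent
    refine ⟨max (Cu/δ) (Cf * (N.factorial : ℝ) ^ (s-1)), max (max Ru Rf) 1,
      lt_max_of_lt_left (div_pos hCu hδ), lt_max_of_lt_right one_pos, fun i j => ?_⟩
    rw [hrpow1, mul_one]
    have hRle : ∀ (R : ℝ), 0 < R → R ≤ max (max Ru Rf) 1 → R ^ (i+j) ≤ (max (max Ru Rf) 1) ^ (i+j) :=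
      fun R hR hle => pow_le_pow_left₀ hR.le hle _
    simp only [Pco, hco]; simp only [hH]
    rw [show a * (i + b) + b * j = a * i + b * j + a * b by ring,
        show a * i + b * (j + a) = a * i + b * j + a * b by ring]
    by_cases hc : ((a * i + b * j + a * b : ℕ) : ℂ) = β
    · simp only [if_pos hc, mul_zero, zero_sub, sub_zero, neg_zero, zero_sub, norm_neg]
      have hj : j ≤ a * i + b * j + a * b := by nlinarith [ha, haltb]
      have h1 := hsmall _ j hc hj
      have h2 : Rf ≤ max (max Ru Rf) 1 := le_max_of_le_left (le_max_right _ _)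
      calc ‖co f i j‖ ≤ Cf * Rf ^ (i+j) * (j.factorial : ℝ) ^ (s-1) := hbf i j
        _ ≤ Cf * (max (max Ru Rf) 1) ^ (i+j) * (N.factorial : ℝ) ^ (s-1) := by gcongr
        _ = (Cf * (N.factorial : ℝ) ^ (s-1)) * (max (max Ru Rf) 1) ^ (i+j) := by ring
        _ ≤ _ := by gcongr <;> first | exact le_max_right _ _ | positivity
    · simp only [if_neg hc]
      set d : ℂ := ((a * i + b * j + a * b : ℕ) : ℂ) - β with hd
      have hdne : d ≠ 0 := sub_ne_zero.mpr hc
      have hδd : δ ≤ ‖d‖ := hδle _ hc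
      have key : (((i + b).factorial / i.factorial : ℕ) : ℂ) * (co g (i+b) j / d)
          - (((j + a).factorial / j.factorial : ℕ) : ℂ) * (co g i (j+a) / d) - co f i j
          = -((d * co f i j - Pco a b g i j) / d) := by
        rw [Pco]; field_simp; ring
      rw [key, norm_neg, norm_div]
      have hdeq : d * co f i j - Pco a b g i j
          = (((a * i + b * j : ℕ) : ℂ) - β + (a : ℂ) * (b : ℂ)) * co f i j - Pco a b g i j := by
        rw [hd]; push_cast; ring_nf
      have hu := hbu i j
      rw [hrpow1, mul_one] at hu
      calc ‖d * co f i j - Pco a b g i j‖ / ‖d‖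
          ≤ (Cu * Ru ^ (i+j)) / δ := by
            rw [hdeq]
            gcongr
        _ = Cu / δ * Ru ^ (i+j) := by ring
        _ ≤ max (Cu/δ) (Cf * (N.factorial : ℝ) ^ (s-1)) * (max (max Ru Rf) 1) ^ (i+j) := by
            have hC3 : Cu/δ ≤ max (Cu/δ) (Cf * (N.factorial : ℝ) ^ (s-1)) := le_max_left _ _
            have hR3 : Ru ≤ max (max Ru Rf) 1 := le_max_of_le_left (le_max_left _ _)
            gcongr
  · -- E h - g convergent
    refine ⟨Cg * (N.factorial : ℝ) ^ (s-1), max Rg 1, by positivity,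
      lt_max_of_lt_right one_pos, fun i j => ?_⟩
    rw [hrpow1, mul_one]
    simp only [Eco, hco]; simp only [hH]
    by_cases hc : ((a * i + b * j : ℕ) : ℂ) = β
    · simp only [if_pos hc, mul_zero, zero_sub, norm_neg]
      have hj : j ≤ a * i + b * j := by nlinarith [ha, haltb]
      have h1 := hsmall _ j hc hj
      have h2 : Rg ≤ max Rg 1 := le_max_left _ _
      calc ‖co g i j‖ ≤ Cg * Rg ^ (i+j) * (j.factorial : ℝ) ^ (s-1) := hbg i j
        _ ≤ Cg * (max Rg 1) ^ (i+j) * (N.factorial : ℝ) ^ (s-1) := by gcongr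
        _ = (Cg * (N.factorial : ℝ) ^ (s-1)) * (max Rg 1) ^ (i+j) := by ring
    · simp only [if_neg hc]
      have hdne : ((a * i + b * j : ℕ) : ℂ) - β ≠ 0 := sub_ne_zero.mpr hc
      rw [mul_comm, div_mul_cancel₀ _ hdne, sub_self, norm_zero]
      positivity
end
end

section
/- Let a and b be coprime integers with 0 < a < b and β ∈ ℂ. The ℂ-vector space {f ∈ ℂ[[x₁,x₂]] : P f = 0 and (a·i + b·j − β)·f_{(i,j)} = 0 for all (i,j)} of formal power series solutions of the hypergeometric system at the origin has dimension 1 if β = a·n₁ + b·n₂ for some n₁, n₂ ∈ ℕ, and dimension 0 otherwise. -/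
noncomputable section

lemma co_add (f g : M2) (i j : ℕ) : co (f + g) i j = co f i j + co g i j := by simp [co]

lemma co_smul (c : ℂ) (f : M2) (i j : ℕ) : co (c • f) i j = c * co f i j := by simp [co]

lemma co_zero (i j : ℕ) : co (0 : M2) i j = 0 := by simp [co]

lemma gevreyFn_zero {s : ℝ} : GevreyFn s fun _ _ => (0 : ℂ) :=
  ⟨1, 1, one_pos, one_pos, by intro i j; simp; positivity⟩

lemma gevreyFn_add {s : ℝ} {F G : ℕ → ℕ → ℂ} (hF : GevreyFn s F) (hG : GevreyFn s G) :
    GevreyFn s fun i j => F i j + G i j := by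
  obtain ⟨C, R, hC, hR, h⟩ := hF
  obtain ⟨C', R', hC', hR', h'⟩ := hG
  refine ⟨C + C', max R R', by positivity, lt_of_lt_of_le hR (le_max_left _ _), fun i j => ?_⟩
  have h1 := h i j
  have h2 := h' i j
  have hRm : R ^ (i + j) ≤ (max R R') ^ (i + j) := pow_le_pow_left₀ hR.le (le_max_left _ _) _
  have hRm' : R' ^ (i + j) ≤ (max R R') ^ (i + j) := pow_le_pow_left₀ hR'.le (le_max_right _ _) _
  have hfac : (0 : ℝ) ≤ (j.factorial : ℝ) ^ (s - 1) := by positivity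
  calc ‖F i j + G i j‖ ≤ ‖F i j‖ + ‖G i j‖ :=
        norm_add_le _ _
    _ ≤ C * R ^ (i + j) * (j.factorial : ℝ) ^ (s - 1)
        + C' * R' ^ (i + j) * (j.factorial : ℝ) ^ (s - 1) := add_le_add h1 h2
    _ ≤ C * (max R R') ^ (i + j) * (j.factorial : ℝ) ^ (s - 1)
        + C' * (max R R') ^ (i + j) * (j.factorial : ℝ) ^ (s - 1) := by gcongr
    _ = (C + C') * (max R R') ^ (i + j) * (j.factorial : ℝ) ^ (s - 1) := by ring

lemma gevreyFn_smul {s : ℝ} (c : ℂ) {F : ℕ → ℕ → ℂ} (hF : GevreyFn s F) :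
    GevreyFn s fun i j => c * F i j := by
  obtain ⟨C, R, hC, hR, h⟩ := hF
  refine ⟨(‖c‖ + 1) * C, R, by positivity, hR, fun i j => ?_⟩
  have h1 := h i j
  calc ‖c * F i j‖ = ‖c‖ * ‖F i j‖ := by simp [map_mul]
    _ ≤ (‖c‖ + 1) * (C * R ^ (i + j) * (j.factorial : ℝ) ^ (s - 1)) := by
        apply mul_le_mul (by linarith) h1 (norm_nonneg _) (by positivity)
    _ = (‖c‖ + 1) * C * R ^ (i + j) * (j.factorial : ℝ) ^ (s - 1) := by ring

lemma gevreyFn_co_add {s : ℝ} {f g : M2} (hf : GevreyFn s (co f)) (hg : GevreyFn s (co g)) :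
    GevreyFn s (co (f + g)) := by
  have : co (f + g) = fun i j => co f i j + co g i j := by funext i j; exact co_add f g i j
  rw [this]; exact gevreyFn_add hf hg

lemma gevreyFn_co_smul {s : ℝ} (c : ℂ) {f : M2} (hf : GevreyFn s (co f)) :
    GevreyFn s (co (c • f)) := by
  have : co (c • f) = fun i j => c * co f i j := by funext i j; exact co_smul c f i j
  rw [this]; exact gevreyFn_smul c hf

lemma gevreyFn_co_zero {s : ℝ} : GevreyFn s (co (0 : M2)) := by
  have : co (0 : M2) = fun _ _ => (0 : ℂ) := by funext i j; exact co_zero i j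
  rw [this]; exact gevreyFn_zero

lemma pco_add (a b : ℕ) (f g : M2) (i j : ℕ) :
    Pco a b (f + g) i j = Pco a b f i j + Pco a b g i j := by
  simp only [Pco, co_add]; ring

lemma pco_smul (a b : ℕ) (c : ℂ) (f : M2) (i j : ℕ) :
    Pco a b (c • f) i j = c * Pco a b f i j := by
  simp only [Pco, co_smul]; ring

lemma pco_zero (a b : ℕ) (i j : ℕ) : Pco a b (0 : M2) i j = 0 := by
  simp [Pco, co_zero]

lemma eco_add (a b : ℕ) (β : ℂ) (f g : M2) (i j : ℕ) :
    Eco a b β (f + g) i j = Eco a b β f i j + Eco a b β g i j := by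
  simp only [Eco, co_add]; ring

lemma eco_smul (a b : ℕ) (β : ℂ) (c : ℂ) (f : M2) (i j : ℕ) :
    Eco a b β (c • f) i j = c * Eco a b β f i j := by
  simp only [Eco, co_smul]; ring

lemma eco_zero (a b : ℕ) (β : ℂ) (i j : ℕ) : Eco a b β (0 : M2) i j = 0 := by
  simp [Eco, co_zero]

lemma epco_add (a b : ℕ) (β ε : ℂ) (f g : M2) (i j : ℕ) :
    Epco a b β ε (f + g) i j = Epco a b β ε f i j + Epco a b β ε g i j := by
  simp only [Epco, co_add]; ring

lemma epco_smul (a b : ℕ) (β ε : ℂ) (c : ℂ) (f : M2) (i j : ℕ) :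
    Epco a b β ε (c • f) i j = c * Epco a b β ε f i j := by
  simp only [Epco, co_smul]; ring

lemma epco_zero (a b : ℕ) (β ε : ℂ) (i j : ℕ) : Epco a b β ε (0 : M2) i j = 0 := by
  simp [Epco, co_zero]

/-- The space of formal power series solutions of the hypergeometric system at the origin:
`P f = 0` and `E f = 0` (the latter meaning `(a·i + b·j - β)·f_{(i,j)} = 0` for all `(i,j)`). -/
def SolOrigin (a b : ℕ) (β : ℂ) : Submodule ℂ M2 where
  carrier := {f | (∀ i j : ℕ, Pco a b f i j = 0) ∧ ∀ i j : ℕ, Eco a b β f i j = 0}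
  add_mem' := by
    rintro f g ⟨hf1, hf2⟩ ⟨hg1, hg2⟩
    exact ⟨fun i j => by rw [pco_add, hf1 i j, hg1 i j, add_zero],
      fun i j => by rw [eco_add, hf2 i j, hg2 i j, add_zero]⟩
  zero_mem' := ⟨fun i j => pco_zero a b i j, fun i j => eco_zero a b β i j⟩
  smul_mem' := by
    rintro c f ⟨hf1, hf2⟩
    exact ⟨fun i j => by rw [pco_smul, hf1 i j, mul_zero],
      fun i j => by rw [eco_smul, hf2 i j, mul_zero]⟩

lemma finsupp_fin2_eq (d : Fin 2 →₀ ℕ) :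
    d = Finsupp.single 0 (d 0) + Finsupp.single 1 (d 1) := by
  ext x
  fin_cases x <;> simp [Finsupp.single_apply]

lemma co_ext {f g : M2} (h : ∀ i j, co f i j = co g i j) : f = g := by
  apply MvPowerSeries.ext
  intro d
  have := h (d 0) (d 1)
  rwa [co, co, ← finsupp_fin2_eq d] at this

def hgSol (a b n : ℕ) : M2 := fun d =>
  if a * d 0 + b * d 1 = n then 1 / (((d 0).factorial : ℂ) * ((d 1).factorial : ℂ)) else 0

lemma co_hgSol (a b n i j : ℕ) :
    co (hgSol a b n) i j
      = if a * i + b * j = n then 1 / ((i.factorial : ℂ) * (j.factorial : ℂ)) else 0 := by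
  have h0 : ((Finsupp.single (0 : Fin 2) i + Finsupp.single (1 : Fin 2) j) : Fin 2 →₀ ℕ) 0 = i := by
    simp [Finsupp.single_apply]
  have h1 : ((Finsupp.single (0 : Fin 2) i + Finsupp.single (1 : Fin 2) j) : Fin 2 →₀ ℕ) 1 = j := by
    simp [Finsupp.single_apply]
  rw [co, MvPowerSeries.coeff_apply]
  show (if _ then _ else _) = _
  rw [h0, h1]

lemma cast_fac_div_mul (i b : ℕ) :
    ((((i + b).factorial / i.factorial : ℕ)) : ℂ) * (i.factorial : ℂ) = ((i + b).factorial : ℂ) := by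
  exact_mod_cast congrArg (Nat.cast (R := ℂ))
    (Nat.div_mul_cancel (Nat.factorial_dvd_factorial (Nat.le_add_right i b)))

lemma u_step (a b : ℕ) {f : M2} (hP : ∀ i j, Pco a b f i j = 0) (i j : ℕ) :
    ((i + b).factorial : ℂ) * (j.factorial : ℂ) * co f (i + b) j
      = (i.factorial : ℂ) * ((j + a).factorial : ℂ) * co f i (j + a) := by
  have h := hP i j
  rw [Pco, sub_eq_zero] at h
  have hA := cast_fac_div_mul i b
  have hB := cast_fac_div_mul j a
  linear_combination ((i.factorial : ℂ) * (j.factorial : ℂ)) * h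
    - (j.factorial : ℂ) * co f (i + b) j * hA
    + (i.factorial : ℂ) * co f i (j + a) * hB

lemma u_desc (a b n : ℕ) (hb : 0 < b) {f : M2} (hP : ∀ i j, Pco a b f i j = 0) :
    ∀ i j, a * i + b * j = n →
      (i.factorial : ℂ) * (j.factorial : ℂ) * co f i j
        = ((i % b).factorial : ℂ) * ((j + a * (i / b)).factorial : ℂ)
            * co f (i % b) (j + a * (i / b)) := by
  intro i
  induction i using Nat.strong_induction_on with
  | _ i ih =>
    intro j hij
    by_cases h : b ≤ i
    · obtain ⟨m, rfl⟩ : ∃ m, i = m + b := ⟨i - b, by omega⟩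
      have hlev : a * m + b * (j + a) = n := by rw [← hij]; ring
      have h1 : (m + b) % b = m % b := Nat.add_mod_right m b
      have h2 : j + a * ((m + b) / b) = (j + a) + a * (m / b) := by
        rw [Nat.add_div_right _ hb]; ring
      calc ((m + b).factorial : ℂ) * (j.factorial : ℂ) * co f (m + b) j
          = (m.factorial : ℂ) * ((j + a).factorial : ℂ) * co f m (j + a) := u_step a b hP m j
        _ = ((m % b).factorial : ℂ) * (((j + a) + a * (m / b)).factorial : ℂ)
              * co f (m % b) ((j + a) + a * (m / b)) := ih m (by omega) (j + a) hlev
        _ = _ := by rw [h1, h2]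
    · rw [Nat.mod_eq_of_lt (by omega), Nat.div_eq_of_lt (by omega), Nat.mul_zero, Nat.add_zero]

lemma u_const (a b n : ℕ) (hab : Nat.Coprime a b) (hb : 0 < b) {f : M2}
    (hP : ∀ i j, Pco a b f i j = 0)
    {i j i' j' : ℕ} (h1 : a * i + b * j = n) (h2 : a * i' + b * j' = n) :
    (i.factorial : ℂ) * (j.factorial : ℂ) * co f i j
      = (i'.factorial : ℂ) * (j'.factorial : ℂ) * co f i' j' := by
  have e1 := u_desc a b n hb hP i j h1
  have e2 := u_desc a b n hb hP i' j' h2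
  have hq : i = b * (i / b) + i % b := (Nat.div_add_mod i b).symm
  have hq' : i' = b * (i' / b) + i' % b := (Nat.div_add_mod i' b).symm
  have k1 : a * (i % b) + b * (j + a * (i / b)) = n := by
    rw [← h1]; conv_rhs => rw [hq]
    ring
  have k2 : a * (i' % b) + b * (j' + a * (i' / b)) = n := by
    rw [← h2]; conv_rhs => rw [hq']
    ring
  have hmodeq : i % b ≡ i' % b [MOD b] := by
    apply Nat.ModEq.cancel_left_of_coprime hab.symm
    show (a * (i % b)) % b = (a * (i' % b)) % b
    rw [← Nat.add_mul_mod_self_left (a * (i % b)) b (j + a * (i / b)),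
      ← Nat.add_mul_mod_self_left (a * (i' % b)) b (j' + a * (i' / b)), k1, k2]
  have hmod : i % b = i' % b := by
    have := hmodeq
    unfold Nat.ModEq at this
    rwa [Nat.mod_mod_of_dvd _ dvd_rfl, Nat.mod_mod_of_dvd _ dvd_rfl] at this
  have harg : j + a * (i / b) = j' + a * (i' / b) := by
    rw [hmod] at k1
    have : b * (j + a * (i / b)) = b * (j' + a * (i' / b)) := by omega
    exact Nat.eq_of_mul_eq_mul_left hb this
  rw [e1, e2, hmod, harg]

lemma pco_hgSol (a b n : ℕ) (i j : ℕ) : Pco a b (hgSol a b n) i j = 0 := by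
  rw [Pco, co_hgSol, co_hgSol]
  have hkey : a * i + b * (j + a) = a * (i + b) + b * j := by ring
  by_cases h : a * (i + b) + b * j = n
  · rw [if_pos h, if_pos (hkey.trans h)]
    have hA := cast_fac_div_mul i b
    have hB := cast_fac_div_mul j a
    have f1 : ((i + b).factorial : ℂ) ≠ 0 := Nat.cast_ne_zero.mpr (Nat.factorial_ne_zero _)
    have f2 : ((j + a).factorial : ℂ) ≠ 0 := Nat.cast_ne_zero.mpr (Nat.factorial_ne_zero _)
    have f3 : (i.factorial : ℂ) ≠ 0 := Nat.cast_ne_zero.mpr (Nat.factorial_ne_zero _)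
    have f4 : (j.factorial : ℂ) ≠ 0 := Nat.cast_ne_zero.mpr (Nat.factorial_ne_zero _)
    field_simp
    linear_combination ((j + a).factorial : ℂ) * hA - ((i + b).factorial : ℂ) * hB
  · rw [if_neg h, if_neg fun hc => h (hkey ▸ hc)]
    simp

lemma hgSol_mem (a b n : ℕ) : hgSol a b n ∈ SolOrigin a b (n : ℂ) := by
  refine ⟨fun i j => pco_hgSol a b n i j, fun i j => ?_⟩
  rw [Eco, co_hgSol]
  by_cases h : a * i + b * j = n
  · rw [if_pos h, h, sub_self, zero_mul]
  · rw [if_neg h, mul_zero]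

lemma hgSol_ne_zero (a b n : ℕ) (hn : ∃ n₁ n₂ : ℕ, a * n₁ + b * n₂ = n) :
    hgSol a b n ≠ 0 := by
  obtain ⟨n₁, n₂, hn⟩ := hn
  intro h
  have := co_hgSol a b n n₁ n₂
  rw [h, co_zero, if_pos hn] at this
  have f3 : (n₁.factorial : ℂ) ≠ 0 := Nat.cast_ne_zero.mpr (Nat.factorial_ne_zero _)
  have f4 : (n₂.factorial : ℂ) ≠ 0 := Nat.cast_ne_zero.mpr (Nat.factorial_ne_zero _)
  exact (one_div_ne_zero (mul_ne_zero f3 f4)) this.symm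

lemma sol_eq_span (a b : ℕ) (hab : Nat.Coprime a b) (hb : 0 < b) (n₁ n₂ : ℕ) :
    SolOrigin a b ((a * n₁ + b * n₂ : ℕ) : ℂ) = Submodule.span ℂ {hgSol a b (a * n₁ + b * n₂)} := by
  set n := a * n₁ + b * n₂ with hn
  apply le_antisymm
  · intro f hf
    obtain ⟨hP, hE⟩ := hf
    rw [Submodule.mem_span_singleton]
    refine ⟨(n₁.factorial : ℂ) * (n₂.factorial : ℂ) * co f n₁ n₂, ?_⟩
    symm
    apply co_ext
    intro i j
    rw [co_smul, co_hgSol]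
    by_cases h : a * i + b * j = n
    · rw [if_pos h]
      have hc := u_const a b n hab hb hP h hn.symm
      have f3 : (i.factorial : ℂ) ≠ 0 := Nat.cast_ne_zero.mpr (Nat.factorial_ne_zero _)
      have f4 : (j.factorial : ℂ) ≠ 0 := Nat.cast_ne_zero.mpr (Nat.factorial_ne_zero _)
      field_simp
      linear_combination hc
    · rw [if_neg h, mul_zero]
      have he := hE i j
      rw [Eco] at he
      rcases mul_eq_zero.mp he with h' | h'
      · exfalso
        apply h
        have : ((a * i + b * j : ℕ) : ℂ) = (n : ℂ) := by
          rw [sub_eq_zero] at h'; exact h'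
        exact_mod_cast this
      · exact h'
  · rw [Submodule.span_le, Set.singleton_subset_iff]
    exact hgSol_mem a b n

/-- The space of formal power series solutions of the hypergeometric system at the origin has
dimension `1` if `β ∈ a·ℕ + b·ℕ` and dimension `0` otherwise. -/
theorem dim_formal_solutions_at_origin
    (a b : ℕ) (hab : Nat.Coprime a b) (ha : 0 < a) (haltb : a < b) (β : ℂ) :
    ((∃ n₁ n₂ : ℕ, β = (a : ℂ) * n₁ + (b : ℂ) * n₂) →
        Module.rank ℂ (SolOrigin a b β) = 1) ∧
    ((¬ ∃ n₁ n₂ : ℕ, β = (a : ℂ) * n₁ + (b : ℂ) * n₂) →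
        Module.rank ℂ (SolOrigin a b β) = 0) := by
  constructor
  · rintro ⟨n₁, n₂, rfl⟩
    have hβ : (a : ℂ) * n₁ + (b : ℂ) * n₂ = ((a * n₁ + b * n₂ : ℕ) : ℂ) := by push_cast; ring
    rw [hβ, sol_eq_span a b hab (ha.trans haltb) n₁ n₂,
      rank_span_set ((linearIndepOn_singleton_iff ℂ (v := id) (i := hgSol a b (a * n₁ + b * n₂))).mpr (hgSol_ne_zero a b _ ⟨n₁, n₂, rfl⟩)),
      Cardinal.mk_singleton]
  · intro h
    have hbot : SolOrigin a b β = ⊥ := by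
      rw [eq_bot_iff]
      rintro f ⟨hP, hE⟩
      rw [Submodule.mem_bot]
      apply co_ext
      intro i j
      rw [co_zero]
      have he := hE i j
      rw [Eco] at he
      rcases mul_eq_zero.mp he with h' | h'
      · exact absurd ⟨i, j, by rw [sub_eq_zero] at h'; rw [← h']; push_cast; ring⟩ h
      · exact h'
    rw [hbot, rank_bot]

end
end
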